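/- Let (NAK, NBK) be a cancellation pair. Then the extremal configurations of the monomials ANAK and ANBK are identical. -/

import Mathlib

open Finset Filter MvPowerSeries

noncomputable section

/-- Formal power series in two variables `q` (index 0) and `z` (index 1). -/
abbrev PS : Type := MvPowerSeries (Fin 2) ℂ

/-- The variable `q`. -/
def Qv : PS := MvPowerSeries.X 0
/-- The variable `z`. -/
def Zv : PS := MvPowerSeries.X 1

/-- Build a power series from its coefficient function. -/
def ofCoeff (c : (Fin 2 →₀ ℕ) → ℂ) : PS := c

/-- The exponent `q^a z^c`. -/
def idx2 (a c : ℕ) : Fin 2 →₀ ℕ := Finsupp.single 0 a + Finsupp.single 1 c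

/-- The q-shift operator `(S g)(q,z) = g(q,qz)`. -/
def Sop (f : PS) : PS :=
  ofCoeff fun e => if e 1 ≤ e 0 then MvPowerSeries.coeff (idx2 (e 0 - e 1) (e 1)) f else 0

/-- The window condition for `(k,l)`-configurations: `x_j + ... + x_{j+l-1} ≤ k`. -/
def windowOK (k l : ℕ) (x : ℕ → ℕ) : Prop := ∀ j, ∑ t ∈ Finset.range l, x (j + t) ≤ k

/-- The boundary condition: `x_0 + ... + x_i ≤ b_i` for `0 ≤ i ≤ l-2`. -/
def boundOK (l : ℕ) (b : ℕ → ℕ) (x : ℕ → ℕ) : Prop :=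
  ∀ i, i < l - 1 → ∑ t ∈ Finset.range (i + 1), x t ≤ b i

/-- Admissible boundary vectors: `b_0 ≤ b_1 ≤ ... ≤ b_{l-2} ≤ k`. -/
def AdmB (k l : ℕ) (b : ℕ → ℕ) : Prop :=
  (∀ i j, i ≤ j → j < l - 1 → b i ≤ b j) ∧ ∀ i, i < l - 1 → b i ≤ k

/-- The character `χ^{(N)}_{k,l;b}(q,z)`: the coefficient of `q^a z^m` counts
`(k,l)`-configurations of length at most `N` obeying the boundary conditions,
with `Σ j·x_j = a` and `Σ x_j = m`. -/
def chiN (k l N : ℕ) (b : ℕ → ℕ) : PS :=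
  ofCoeff fun e => (Nat.card {x : ℕ → ℕ //
    windowOK k l x ∧ boundOK l b x ∧ (∀ i, N ≤ i → x i = 0) ∧
    ∑ j ∈ Finset.range N, j * x j = e 0 ∧ ∑ j ∈ Finset.range N, x j = e 1} : ℂ)

/-- The limit character `χ^{(∞)}_{k,l;b}(q,z)`. -/
def chiInf (k l : ℕ) (b : ℕ → ℕ) : PS :=
  ofCoeff fun e => (Nat.card {x : ℕ → ℕ //
    windowOK k l x ∧ boundOK l b x ∧ (∀ i, e 0 + 1 ≤ i → x i = 0) ∧
    ∑ j ∈ Finset.range (e 0 + 1), j * x j = e 0 ∧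
    ∑ j ∈ Finset.range (e 0 + 1), x j = e 1} : ℂ)

/-- The shifted boundary vector `(b_1 - i, ..., b_{l-2} - i, k - i)`. -/
def shiftB (k l : ℕ) (b : ℕ → ℕ) (i : ℕ) : ℕ → ℕ :=
  fun j => if j + 1 ≤ l - 2 then b (j + 1) - i else k - i

/-- The monomial `q^{p.1} z^{p.2}`. -/
def monoPS (p : ℕ × ℕ) : PS := Qv ^ p.1 * Zv ^ p.2

/-- Exponents in the bracket `[P_1,...,P_l] = P_1^{b_0} P_2^{b_1-b_0} ⋯ P_l^{k-b_{l-2}}`. -/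
def bexp (l k : ℕ) (b : ℕ → ℕ) (i : ℕ) : ℕ :=
  if i = 0 then b 0 else if i = l - 1 then k - b (l - 2) else b i - b (i - 1)

/-- The bracket `[P_1,...,P_l]` as a function of the boundary vector `b`. -/
def bracket (l k : ℕ) (P : ℕ → ℕ × ℕ) (b : ℕ → ℕ) : PS :=
  ∏ i ∈ Finset.range l, monoPS (P i) ^ bexp l k b i

/-- q-exponent pattern of the tuples in the list defining `V_l`
(`r` of the entries carry a factor `z`; `c 0 = 0`). -/
def patQ (l r : ℕ) (c : ℕ → ℕ) (j : ℕ) : ℕ := if j < r then c (l - r + j) else c (j - r)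

/-- z-exponent pattern of the tuples in the list defining `V_l`. -/
def patZ (r j : ℕ) : ℕ := if j < r then 1 else 0

/-- The tuples `(P_1,...,P_l)` appearing in the definition of `V_l`, namely
`q^{mk} z^{nk}[q^{c_{l-r}}z, …, q^{c_{l-1}}z, 1, q^{c_1}, …, q^{c_{l-1-r}}]`
with the common factor `q^m z^n` distributed over the entries. -/
def SimpleTuple (l : ℕ) (P : ℕ → ℕ × ℕ) : Prop :=
  ∃ m n r : ℕ, r < l ∧ ∃ c : ℕ → ℕ, c 0 = 0 ∧ Monotone c ∧
    ∀ j, j < l → P j = (m + patQ l r c j, n + patZ r j)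

/-- Admissible boundary data. -/
def Adm (k l : ℕ) : Type := {b : ℕ → ℕ // AdmB k l b}

/-- The ambient space of functions of `b` with values in power series; `V_l` is a
subspace of it. -/
abbrev VV (k l : ℕ) : Type := Adm k l → PS

/-- The simple vector `f(q,z)·[P_1,...,P_l]`. -/
def simpleVal (k l : ℕ) (f : PS) (P : ℕ → ℕ × ℕ) : VV k l := fun b => f * bracket l k P b.val

/-- The space `V_l`, spanned by simple vectors. -/
def Vspan (k l : ℕ) : Submodule ℂ (VV k l) :=
  Submodule.span ℂ {v | ∃ f P, SimpleTuple l P ∧ v = simpleVal k l f P}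

/-- Power series expansion of `1/(1 - q^{w.1} z^{w.2})` where `w` may have negative
exponents, in which case `1/(1-u) = -Σ_{n≥1} u^{-n}` is used. -/
def geomPS : ℤ × ℤ → PS := fun w =>
  if 0 ≤ w.1 ∧ 0 ≤ w.2 then
    ofCoeff fun e => ({n : ℕ | (n : ℤ) * w.1 = (e 0 : ℤ) ∧ (n : ℤ) * w.2 = (e 1 : ℤ)}.ncard : ℂ)
  else
    ofCoeff fun e =>
      -({n : ℕ | 0 < n ∧ (n : ℤ) * w.1 = -(e 0 : ℤ) ∧ (n : ℤ) * w.2 = -(e 1 : ℤ)}.ncard : ℂ)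

/-- Exponents of `S(q^{-1} z P_l / P_1)`. -/
def wExpA (l : ℕ) (P : ℕ → ℕ × ℕ) : ℤ × ℤ :=
  (((P (l-1)).1 : ℤ) + ((P (l-1)).2 : ℤ) - ((P 0).1 : ℤ) - ((P 0).2 : ℤ),
   ((P (l-1)).2 : ℤ) + 1 - ((P 0).2 : ℤ))

/-- The q-shift of a monomial: `S(q^e z^d) = q^{e+d} z^d`. -/
def Smono (p : ℕ × ℕ) : ℕ × ℕ := (p.1 + p.2, p.2)

/-- The tuple `(S P_1, S P_1, S P_2, ..., S P_{l-1})` produced by the operator `A`. -/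
def tupA (P : ℕ → ℕ × ℕ) : ℕ → ℕ × ℕ := fun j => if j = 0 then Smono (P 0) else Smono (P (j - 1))

/-- The tuple `(S(q^{-1} z P_l), S P_1, ..., S P_{l-1})` produced by the operator `B`. -/
def tupB (l : ℕ) (P : ℕ → ℕ × ℕ) : ℕ → ℕ × ℕ :=
  fun j => if j = 0 then ((P (l-1)).1 + (P (l-1)).2, (P (l-1)).2 + 1) else Smono (P (j - 1))

/-- Defining property of the operator `A`:
`A(f[P_1,…,P_l]) = S(f/(1 - q^{-1}zP_l/P_1)·[P_1,P_1,P_2,…,P_{l-1}])`. -/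
def HypA (k l : ℕ) (A : Module.End ℂ (VV k l)) : Prop :=
  ∀ f P, SimpleTuple l P →
    A (simpleVal k l f P) = simpleVal k l (Sop f * geomPS (wExpA l P)) (tupA P)

/-- Defining property of the operator `B`:
`B(f[P_1,…,P_l]) = S(f/(1 - q z^{-1}P_1/P_l)·[q^{-1}zP_l,P_1,…,P_{l-1}])`. -/
def HypB (k l : ℕ) (B : Module.End ℂ (VV k l)) : Prop :=
  ∀ f P, SimpleTuple l P →
    B (simpleVal k l f P) =
      simpleVal k l (Sop f * geomPS (-(wExpA l P).1, -(wExpA l P).2)) (tupB l P)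

/-- The vector `v_ini = [1,...,1]`. -/
def vini (k l : ℕ) : VV k l := simpleVal k l 1 (fun _ => (0, 0))

/-- `(z)_n = Π_{i=0}^{n-1} (1 - q^i z)`. -/
def pochZ (n : ℕ) : PS := ∏ i ∈ Finset.range n, (1 - Qv ^ i * Zv)
/-- `(q)_t = Π_{i=1}^{t} (1 - q^i)`. -/
def pochQ (t : ℕ) : PS := ∏ i ∈ Finset.range t, (1 - Qv ^ (i + 1))
/-- `(q^t z)_∞ = Π_{i≥0} (1 - q^{t+i} z)`, defined coefficientwise. -/
def pochInfQZ (t : ℕ) : PS :=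
  ofCoeff fun e =>
    MvPowerSeries.coeff e (∏ i ∈ Finset.range (e 0 + 1), (1 - Qv ^ (t + i) * Zv))
/-- `(z)_∞ = Π_{i≥0} (1 - q^i z)`. -/
def pochInfZ : PS := pochInfQZ 0

/-- The vector `v_∞ = [1,...,1]/(z)_∞`. -/
def vinf (k l : ℕ) : VV k l := simpleVal k l pochInfZ⁻¹ (fun _ => (0, 0))

/-- Application of a monomial (word) in the operators `A` (letter `true`) and
`B` (letter `false`) to a vector; the leftmost letter acts last read, i.e.
`C_1 C_2 ⋯ C_m v = C_1 (C_2 (⋯ (C_m v)))`. -/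
def wact (k l : ℕ) (A B : Module.End ℂ (VV k l)) (w : List Bool) (v : VV k l) : VV k l :=
  w.foldr (fun c u => if c then A u else B u) v

/-- A good monomial: `C_i = A` implies `C_{i+l-1} = A` (letters 0-indexed, `true = A`). -/
def GoodWord (l : ℕ) (w : List Bool) : Prop :=
  ∀ i, i + (l - 1) < w.length → w.getD i true = true → w.getD (i + (l - 1)) true = true

/-- Canonical representative of an equivalence class of monomials: no trailing `A`s. -/
def Reduced (w : List Bool) : Prop := w = [] ∨ w.getLast? = some false

/-- Symbols for marked vertices: `•`, `∘`, `×`. -/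
inductive MSym : Type
  | dot | circ | mark
  deriving DecidableEq

/-- The `A`-arrow on (possibly marked) vertices. -/
def stepA : List MSym → List MSym
  | MSym.circ :: J => J ++ [MSym.circ]
  | MSym.dot :: _ :: J => MSym.dot :: (J ++ [MSym.circ])
  | MSym.mark :: MSym.dot :: J => MSym.dot :: (J ++ [MSym.circ])
  | MSym.mark :: MSym.circ :: J => MSym.mark :: (J ++ [MSym.circ])
  | MSym.mark :: MSym.mark :: J => MSym.dot :: (J ++ [MSym.circ])
  | v => v

/-- The `B`-arrow on (possibly marked) vertices: rotation. -/
def stepB : List MSym → List MSym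
  | [] => []
  | x :: J => J ++ [x]

/-- The marked path of the monomial `w` (extended by `A`s at positions beyond its
length), starting from `[•,…,•,×]`; `mstate l w t` is the vertex after `t` arrows. -/
def mstate (l : ℕ) (w : List Bool) : ℕ → List MSym
  | 0 => List.replicate (l - 1) MSym.dot ++ [MSym.mark]
  | t + 1 => (if w.getD t true then stepA else stepB) (mstate l w t)

/-- The `t`-th vertex of the marked path has the form `[× • J]`, i.e. the `t`-th
arrow is of type (i) or (ii). -/
def CSrc (l : ℕ) (w : List Bool) (t : ℕ) : Prop :=
  (mstate l w t).getD 0 MSym.circ = MSym.mark ∧ (mstate l w t).getD 1 MSym.circ = MSym.dot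

/-- `(N A K, N B K)` is a cancellation pair: `N A K` is good and the displayed `A`
is its cancellation `A`-arrow (the last arrow of type (i) or (ii)). -/
def CancelPair (l : ℕ) (N K : List Bool) : Prop :=
  GoodWord l (N ++ true :: K) ∧ CSrc l (N ++ true :: K) N.length ∧
    ∀ t, N.length < t → ¬ CSrc l (N ++ true :: K) t

/-- `w` is good and has a cancellation `A`-arrow. -/
def HasCA (l : ℕ) (w : List Bool) : Prop :=
  GoodWord l w ∧ ∃ t, w.getD t true = true ∧ CSrc l w t ∧ ∀ t', t < t' → ¬ CSrc l w t'

/-- `w` is good and has a cancellation `B`-arrow. -/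
def HasCB (l : ℕ) (w : List Bool) : Prop :=
  GoodWord l w ∧ ∃ t, w.getD t true = false ∧ CSrc l w t ∧ ∀ t', t < t' → ¬ CSrc l w t'

/-- The index of the cancellation arrow. -/
def cancelIdx (l : ℕ) (w : List Bool) : ℕ :=
  sInf {t | CSrc l w t ∧ ∀ t', t < t' → ¬ CSrc l w t'}

/-- Flip the letter at the cancellation arrow. -/
def flipCancel (l : ℕ) (w : List Bool) : List Bool :=
  (w ++ List.replicate (cancelIdx l w + 1 - w.length) true).set (cancelIdx l w) false

/-- The lattice `Λ` is `ℕ → ℤ` supported on `{0,…,l-1}`; coordinates `0,…,l-2`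
are the generators `b_0,…,b_{l-2}` and coordinate `l-1` is the generator `k`.
`Ma` is the map `M_a`: `b_i ↦ b_{i+1}` (`i ≤ l-3`), `b_{l-2} ↦ k`, `k ↦ k`. -/
def Ma (l : ℕ) (v : ℕ → ℤ) : ℕ → ℤ := fun j =>
  if j = 0 then 0
  else if j = l - 1 then v (l - 2) + v (l - 1)
  else if j < l - 1 then v (j - 1)
  else 0

/-- The map `M_b`: `b_i ↦ b_{i+1} - b_0` (`i ≤ l-3`), `b_{l-2} ↦ k - b_0`, `k ↦ k`. -/
def Mb (l : ℕ) (v : ℕ → ℤ) : ℕ → ℤ := fun j =>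
  if j = 0 then -(∑ i ∈ Finset.range (l - 1), v i)
  else if j = l - 1 then v (l - 2) + v (l - 1)
  else if j < l - 1 then v (j - 1)
  else 0

/-- The representative `ī ∈ {1,…,l}` of `i` modulo `l`. -/
def ibar (l : ℕ) (i : ℤ) : ℕ := ((i - 1) % (l : ℤ)).toNat + 1

/-- `ι_{i,j} = b_{ī-2} - b_{j̄-2} + k·δ(ī ≤ j̄)` (with `b_{-1} = 0`). -/
def iotaL (l : ℕ) (i j : ℤ) : ℕ → ℤ := fun t =>
  (if 2 ≤ ibar l i ∧ t = ibar l i - 2 then 1 else 0)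
  - (if 2 ≤ ibar l j ∧ t = ibar l j - 2 then 1 else 0)
  + (if ibar l i ≤ ibar l j ∧ t = l - 1 then 1 else 0)

/-- `M_{c_1} ∘ ⋯ ∘ M_{c_m}` applied to `v`, where `c_i = a` if the `i`-th letter is
`A` (`true`) and `c_i = b` otherwise. -/
def applyWord (l : ℕ) (w : List Bool) (v : ℕ → ℤ) : ℕ → ℤ :=
  w.foldr (fun c u => if c then Ma l u else Mb l u) v

/-- The extremal configuration of the monomial `w`:
`x_i = 0` if `C_{i+1} = A` and `x_i = M_{c_1} ∘ ⋯ ∘ M_{c_i}(b_0)` if `C_{i+1} = B`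
(entries beyond the length of `w` are `0`, matching equivalence of configurations). -/
def xconf (l : ℕ) (w : List Bool) (i : ℕ) : ℕ → ℤ :=
  if w.getD i true = true then 0 else applyWord l (w.take i) (iotaL l 2 1)

/-- The `A`-arrow of the summation graph (vertices as arrays of `•` = `true`,
`∘` = `false`). -/
def vstepA : List Bool → List Bool
  | false :: J => J ++ [false]
  | true :: _ :: J => true :: (J ++ [false])
  | v => v

/-- The `B`-arrow of the summation graph: rotation. -/
def vstepB : List Bool → List Bool
  | [] => []
  | x :: J => J ++ [x]

/-- The path associated with `w` in the summation graph, starting from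
`I_top = [•,…,•]`; `vstate l w t` is the vertex `I^{(t)}`. -/
def vstate (l : ℕ) (w : List Bool) (t : ℕ) : List Bool :=
  (w.take t).foldl (fun v c => if c then vstepA v else vstepB v) (List.replicate l true)

/-- The evolution of the vector part of a simple vector under one operator. -/
def tupStep (l : ℕ) (c : Bool) (P : ℕ → ℕ × ℕ) : ℕ → ℕ × ℕ :=
  if c then tupA P else tupB l P

/-- The vector part of `M v_∞` for a word `M`. -/
def wordTuple (l : ℕ) : List Bool → ℕ → ℕ × ℕ
  | [] => fun _ => (0, 0)
  | c :: w => tupStep l c (wordTuple l w)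

/-- The scalar part of `M v_∞` for a word `M`. -/
def wordScalar (l : ℕ) : List Bool → PS
  | [] => pochInfZ⁻¹
  | c :: w =>
      Sop (wordScalar l w) *
        (if c then geomPS (wExpA l (wordTuple l w))
         else geomPS (-(wExpA l (wordTuple l w)).1, -(wExpA l (wordTuple l w)).2))

/-- A cancellation block `𝔹_s = C_1 ⋯ C_{l+s}` with `C_1 = C_{s+2} = C_l = B`,
`C_2 = ⋯ = C_{s+1} = A`, `C_{l+1} = ⋯ = C_{l+s} = A` (0-indexed positions). -/
def IsBlock (l s : ℕ) (w : List Bool) : Prop :=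
  s ≤ l - 2 ∧ w.length = l + s ∧
  w.getD 0 true = false ∧ w.getD (s + 1) true = false ∧ w.getD (l - 1) true = false ∧
  (∀ i, 1 ≤ i → i ≤ s → w.getD i true = true) ∧
  (∀ i, l ≤ i → i < l + s → w.getD i true = true)

/-- The block `𝔼_i = C_2 ⋯ C_l` where `C_j = B` iff `j ∈ {σ(1),…,σ(i)}`
(1-based values of the permutation; `true = A`, `false = B`). -/
def Eblock (l : ℕ) (σ : Equiv.Perm (Fin l)) (i : ℕ) : List Bool :=
  (List.range (l - 1)).map fun t => decide (∀ a : Fin l, (a : ℕ) < i → (σ a : ℕ) ≠ t + 1)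

/-- The word `𝔼_{l-2}^{n_{l-2}} ⋯ 𝔼_1^{n_1}`. -/
def coreWord (l : ℕ) (σ : Equiv.Perm (Fin l)) (n : ℕ → ℤ) : List Bool :=
  (((List.range (l - 2)).reverse.map fun i' =>
    (List.replicate (n (i' + 1)).toNat (Eblock l σ (i' + 1))).flatten)).flatten

/-- The word `B^{n_{l-1}} 𝔼_{l-2}^{n_{l-2}} ⋯ 𝔼_1^{n_1}`; for `n_{l-1} < 0` the
first `-n_{l-1}` letters (which are `B`s) are removed instead. -/
def theWord (l : ℕ) (σ : Equiv.Perm (Fin l)) (n : ℕ → ℤ) : List Bool :=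
  if 0 ≤ n (l - 1) then List.replicate (n (l - 1)).toNat false ++ coreWord l σ n
  else (coreWord l σ n).drop (-(n (l - 1))).toNat

/-- `σ(1) = l` and `σ(l) = 1` (in 1-based notation). -/
def SigmaCond (l : ℕ) (σ : Equiv.Perm (Fin l)) : Prop :=
  (∀ a : Fin l, (a : ℕ) = 0 → (σ a : ℕ) = l - 1) ∧
  (∀ a : Fin l, (a : ℕ) = l - 1 → (σ a : ℕ) = 0)

/-- The conditions on `n = (n_1,…,n_{l-1})`: `n_i ≥ 0` for `i ≤ l-2`,
`n_{l-1} ≥ 2 - σ(l-1)`, `n_i > 0` whenever `σ(i) < σ(i+1)`; the unused entries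
are normalized to `0`. -/
def NCond (l : ℕ) (σ : Equiv.Perm (Fin l)) (n : ℕ → ℤ) : Prop :=
  (∀ i, 1 ≤ i → i ≤ l - 2 → 0 ≤ n i) ∧
  (∀ a : Fin l, (a : ℕ) = l - 2 → (2 : ℤ) - (((σ a : ℕ) : ℤ) + 1) ≤ n (l - 1)) ∧
  (∀ i, 1 ≤ i → i ≤ l - 1 → ∀ a b : Fin l, (a : ℕ) = i - 1 → (b : ℕ) = i →
      (σ a : ℕ) < (σ b : ℕ) → 0 < n i) ∧
  (∀ i, i = 0 ∨ l - 1 < i → n i = 0)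

end

set_option linter.unreachableTactic false
set_option linter.unusedTactic false
set_option linter.unnecessarySeqFocus false

/-! ### Auxiliary definitions and lemmas for `stmt15` -/

/-- Standard basis vector `e_j` of `ℕ → ℤ`. -/
def ee (j : ℕ) : ℕ → ℤ := fun t => if t = j then 1 else 0

/-- The vector `k - b_{l-2}`. -/
def dlt (l : ℕ) : ℕ → ℤ := fun s => ee (l-1) s - ee (l-2) s

/-- The value attached to a mark symbol by the invariant. -/
def mval (l : ℕ) : MSym → Option (ℕ → ℤ)
  | MSym.dot => none
  | MSym.circ => some (fun _ => 0)
  | MSym.mark => some (dlt l)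

lemma applyWord_nil (l : ℕ) (v : ℕ → ℤ) : applyWord l [] v = v := rfl

lemma applyWord_cons (l : ℕ) (c : Bool) (w : List Bool) (v : ℕ → ℤ) :
    applyWord l (c :: w) v =
      if c then Ma l (applyWord l w v) else Mb l (applyWord l w v) := rfl

lemma applyWord_append (l : ℕ) (u u' : List Bool) (v : ℕ → ℤ) :
    applyWord l (u ++ u') v = applyWord l u (applyWord l u' v) := by
  simp [applyWord, List.foldr_append]

lemma Ma_lin (l : ℕ) (a b : ℤ) (u v : ℕ → ℤ) :
    Ma l (fun s => a * u s + b * v s) = fun s => a * Ma l u s + b * Ma l v s := by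
  funext t
  simp only [Ma]
  split_ifs <;> ring

lemma Mb_lin (l : ℕ) (a b : ℤ) (u v : ℕ → ℤ) :
    Mb l (fun s => a * u s + b * v s) = fun s => a * Mb l u s + b * Mb l v s := by
  funext t
  simp only [Mb]
  split_ifs <;> [skip; ring; ring; ring]
  rw [Finset.sum_add_distrib, ← Finset.mul_sum, ← Finset.mul_sum]
  ring

lemma applyWord_lin (l : ℕ) (wd : List Bool) (a b : ℤ) (u v : ℕ → ℤ) :
    applyWord l wd (fun s => a * u s + b * v s) =
      fun s => a * applyWord l wd u s + b * applyWord l wd v s := by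
  induction wd with
  | nil => rfl
  | cons c wd ih =>
      rw [applyWord_cons, ih]
      cases c
      · simp only [applyWord_cons, if_neg, Bool.false_eq_true, if_false]
        exact Mb_lin l a b _ _
      · simp only [applyWord_cons, if_pos]
        exact Ma_lin l a b _ _

lemma applyWord_sub (l : ℕ) (wd : List Bool) (u v : ℕ → ℤ) :
    applyWord l wd (fun s => u s - v s) =
      fun s => applyWord l wd u s - applyWord l wd v s := by
  have h1 : (fun s => u s - v s) = fun s => 1 * u s + (-1) * v s := by funext s; ring
  rw [h1, applyWord_lin]
  funext s; ring

lemma Ma_ee (l : ℕ) (hl : 2 ≤ l) (j : ℕ) (hj : j < l - 1) :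
    Ma l (ee j) = ee (j + 1) := by
  funext t
  simp only [Ma, ee]
  split_ifs <;> omega

lemma Ma_ee_top (l : ℕ) (hl : 2 ≤ l) : Ma l (ee (l - 1)) = ee (l - 1) := by
  funext t
  simp only [Ma, ee]
  split_ifs <;> omega

lemma sum_ee (l : ℕ) (j : ℕ) :
    ∑ i ∈ Finset.range (l - 1), ee j i = if j < l - 1 then 1 else 0 := by
  simp only [ee]
  rw [Finset.sum_ite_eq' (Finset.range (l-1)) j (fun _ => (1:ℤ))]
  simp

lemma Mb_ee (l : ℕ) (hl : 2 ≤ l) (j : ℕ) (hj : j < l - 1) :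
    Mb l (ee j) = fun s => ee (j + 1) s - ee 0 s := by
  funext t
  simp only [Mb]
  by_cases ht : t = 0
  · subst ht
    rw [if_pos rfl, sum_ee, if_pos hj]
    simp only [ee]
    split_ifs <;> simp_all <;> omega
  · simp only [if_neg ht, ee]
    split_ifs <;> simp_all <;> omega

lemma Mb_ee_top (l : ℕ) (hl : 2 ≤ l) : Mb l (ee (l - 1)) = ee (l - 1) := by
  funext t
  simp only [Mb]
  by_cases ht : t = 0
  · subst ht
    rw [if_pos rfl, sum_ee, if_neg (by omega)]
    simp only [ee]
    split_ifs <;> simp_all <;> omega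
  · simp only [if_neg ht, ee]
    split_ifs <;> simp_all <;> omega

lemma Ma_zero_coord (l : ℕ) (u : ℕ → ℤ) : Ma l u 0 = 0 := by simp [Ma]

lemma Mb_decomp (l : ℕ) (u : ℕ → ℤ) :
    Mb l u = fun s => Ma l u s + Mb l u 0 * ee 0 s := by
  funext t
  by_cases ht : t = 0
  · subst ht
    simp [Ma, ee]
  · simp only [Ma, Mb, ee, if_neg ht]
    split_ifs <;> ring

lemma Ma_dlt (l : ℕ) (hl : 2 ≤ l) : Ma l (dlt l) = fun _ => 0 := by
  funext t
  simp only [Ma, dlt, ee]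
  split_ifs <;> omega
lemma stepA_circ (y : MSym) (rest : List MSym) :
    stepA (MSym.circ :: y :: rest) = y :: (rest ++ [MSym.circ]) := rfl
lemma stepA_dot (y : MSym) (rest : List MSym) :
    stepA (MSym.dot :: y :: rest) = MSym.dot :: (rest ++ [MSym.circ]) := rfl
lemma stepA_mark_dot (rest : List MSym) :
    stepA (MSym.mark :: MSym.dot :: rest) = MSym.dot :: (rest ++ [MSym.circ]) := rfl
lemma stepA_mark_circ (rest : List MSym) :
    stepA (MSym.mark :: MSym.circ :: rest) = MSym.mark :: (rest ++ [MSym.circ]) := rfl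
lemma stepA_mark_mark (rest : List MSym) :
    stepA (MSym.mark :: MSym.mark :: rest) = MSym.dot :: (rest ++ [MSym.circ]) := rfl
lemma stepB_cons (x y : MSym) (rest : List MSym) :
    stepB (x :: y :: rest) = y :: (rest ++ [x]) := rfl

lemma stepA_len (x y : MSym) (rest : List MSym) :
    (stepA (x :: y :: rest)).length = (x :: y :: rest).length := by
  cases x <;> [skip; skip; cases y] <;> simp [stepA_circ, stepA_dot, stepA_mark_dot,
    stepA_mark_circ, stepA_mark_mark]

lemma mstate_zero (l : ℕ) (w : List Bool) :
    mstate l w 0 = List.replicate (l-1) MSym.dot ++ [MSym.mark] := rfl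

lemma mstate_succ (l : ℕ) (w : List Bool) (t : ℕ) :
    mstate l w (t+1) = (if w.getD t true then stepA else stepB) (mstate l w t) := rfl

lemma mstate_len (l : ℕ) (hl : 2 ≤ l) (w : List Bool) (t : ℕ) :
    (mstate l w t).length = l := by
  induction t with
  | zero => simp [mstate_zero]; omega
  | succ t ih =>
      rcases hm : mstate l w t with _ | ⟨x, rest'⟩
      · rw [hm] at ih; simp at ih; omega
      · rcases rest' with _ | ⟨y, rest⟩
        · rw [hm] at ih; simp at ih; omega
        · rw [mstate_succ, hm]
          cases hw : w.getD t true
          · simp [stepB_cons]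
            rw [hm] at ih; simp at ih; omega
          · simp only [if_pos]
            rw [stepA_len]
            rw [← hm]; exact ih

lemma getD_shape_zero (h0 z : MSym) (rest : List MSym) (d : MSym) :
    (h0 :: (rest ++ [z])).getD 0 d = h0 := rfl

lemma getD_shape_mid (h0 z : MSym) (rest : List MSym) (d : MSym) (q : ℕ) (hq : q < rest.length) :
    (h0 :: (rest ++ [z])).getD (q+1) d = rest.getD q d := by
  rw [List.getD_cons_succ]
  rw [List.getD_eq_getElem _ _ (by simp; omega), List.getD_eq_getElem _ _ hq]
  exact List.getElem_append_left ..

lemma getD_shape_top (h0 z : MSym) (rest : List MSym) (d : MSym) :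
    (h0 :: (rest ++ [z])).getD (rest.length + 1) d = z := by
  rw [List.getD_cons_succ]
  rw [List.getD_eq_getElem _ _ (by simp)]
  rw [List.getElem_append_right (by omega)]
  simp
theorem inv_main (l : ℕ) (hl : 2 ≤ l) (w : List Bool) :
    ∀ t, t ≤ w.length → ∀ p, p < l → ∀ v,
      mval l ((mstate l w t).getD p MSym.circ) = some v →
      applyWord l (w.take t) (ee p) =
        fun s => (if p = 0 then 0 else applyWord l (w.take t) (ee (p-1)) s) + v s := by
  intro t
  induction t with
  | zero =>
      intro _ p hp v hv
      rw [mstate_zero] at hv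
      by_cases hpl : p < l - 1
      · rw [List.getD_eq_getElem _ _ (by simp <;> omega),
          List.getElem_append_left (by simp <;> omega)] at hv
        simp [mval] at hv
      · have hpe : p = l - 1 := by omega
        subst hpe
        rw [List.getD_eq_getElem _ _ (by simp <;> omega),
          List.getElem_append_right (by simp)] at hv
        simp at hv
        have hveq : dlt l = v := by simpa [mval] using hv
        subst hveq
        funext s
        rw [if_neg (by omega)]
        simp only [List.take_zero, applyWord_nil, dlt]
        have e1 : l - 1 - 1 = l - 2 := by omega
        rw [e1]
        ring
  | succ t ih =>
      intro ht p hp v hv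
      have htw : t < w.length := by omega
      have htle : t ≤ w.length := by omega
      obtain ⟨c, hc⟩ : ∃ c, w.getD t true = c := ⟨_, rfl⟩
      have htake : w.take (t+1) = w.take t ++ [c] := by
        have h1 : w[t]? = some c := by
          rw [List.getElem?_eq_getElem htw, ← List.getD_eq_getElem w true htw, hc]
        rw [List.take_succ, h1]
        rfl
      have hYrec : ∀ j, applyWord l (w.take (t+1)) (ee j)
          = applyWord l (w.take t) (if c then Ma l (ee j) else Mb l (ee j)) := by
        intro j
        rw [htake, applyWord_append]
        rfl
      have hYlt : ∀ j, j < l - 1 → applyWord l (w.take (t+1)) (ee j) =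
          fun s => applyWord l (w.take t) (ee (j+1)) s -
            (if c then 0 else applyWord l (w.take t) (ee 0) s) := by
        intro j hj
        rw [hYrec]
        cases c with
        | false =>
            simp only [Bool.false_eq_true, if_false]
            rw [Mb_ee l hl j hj, applyWord_sub]
        | true =>
            simp only [if_pos]
            rw [Ma_ee l hl j hj]
            funext s
            ring
      have hYtop : applyWord l (w.take (t+1)) (ee (l-1))
          = applyWord l (w.take t) (ee (l-1)) := by
        rw [hYrec]
        cases c with
        | false => simp only [Bool.false_eq_true, if_false]; rw [Mb_ee_top l hl]
        | true => simp only [if_pos]; rw [Ma_ee_top l hl]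
      have hsl : (mstate l w t).length = l := mstate_len l hl w t
      obtain ⟨x, y, rest, hs⟩ : ∃ x y rest, mstate l w t = x :: y :: rest := by
        rcases hm : mstate l w t with _ | ⟨x, _ | ⟨y, r⟩⟩
        · rw [hm] at hsl; simp at hsl; omega
        · rw [hm] at hsl; simp at hsl; omega
        · exact ⟨x, y, r, rfl⟩
      have hrl : rest.length = l - 2 := by rw [hs] at hsl; simp at hsl; omega
      have hnext : mstate l w (t+1) = (if c then stepA else stepB) (x :: y :: rest) := by
        rw [mstate_succ, hc, hs]
      obtain ⟨h0, z, hns, hz, hh0⟩ :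
          ∃ h0 z, mstate l w (t+1) = h0 :: (rest ++ [z]) ∧
            ((c = true ∧ z = MSym.circ) ∨ (c = false ∧ z = x)) ∧
            ((mval l h0 = none) ∨
             (c = false ∧ h0 = y) ∨
             (c = true ∧ x = MSym.circ ∧ h0 = y) ∨
             (c = true ∧ x = MSym.mark ∧ y = MSym.circ ∧ h0 = MSym.mark)) := by
        cases c with
        | false =>
            exact ⟨y, x, by rw [hnext]; simp [stepB_cons], Or.inr ⟨rfl, rfl⟩,
              Or.inr (Or.inl ⟨rfl, rfl⟩)⟩
        | true =>
            cases x with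
            | circ =>
                exact ⟨y, MSym.circ, by rw [hnext]; simp [stepA_circ],
                  Or.inl ⟨rfl, rfl⟩, Or.inr (Or.inr (Or.inl ⟨rfl, rfl, rfl⟩))⟩
            | dot =>
                exact ⟨MSym.dot, MSym.circ, by rw [hnext]; simp [stepA_dot],
                  Or.inl ⟨rfl, rfl⟩, Or.inl rfl⟩
            | mark =>
                cases y with
                | circ =>
                    exact ⟨MSym.mark, MSym.circ, by rw [hnext]; simp [stepA_mark_circ],
                      Or.inl ⟨rfl, rfl⟩, Or.inr (Or.inr (Or.inr ⟨rfl, rfl, rfl, rfl⟩))⟩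
                | dot =>
                    exact ⟨MSym.dot, MSym.circ, by rw [hnext]; simp [stepA_mark_dot],
                      Or.inl ⟨rfl, rfl⟩, Or.inl rfl⟩
                | mark =>
                    exact ⟨MSym.dot, MSym.circ, by rw [hnext]; simp [stepA_mark_mark],
                      Or.inl ⟨rfl, rfl⟩, Or.inl rfl⟩
      rcases Nat.eq_zero_or_pos p with hp0 | hppos
      · -- p = 0
        subst hp0
        rw [hns, getD_shape_zero] at hv
        funext s
        rw [if_pos rfl]
        have hY0 := congrFun (hYlt 0 (by omega)) s
        norm_num at hY0
        rcases hh0 with hnone | ⟨hcB, hh⟩ | ⟨hcA, hx, hh⟩ | ⟨hcA, hx, hy, hh⟩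
        · rw [hnone] at hv; simp at hv
        · -- c = false, h0 = y
          subst hh; subst hcB
          have holdS1 : (mstate l w t).getD 1 MSym.circ = h0 := by rw [hs]; rfl
          have h1 := congrFun (ih htle 1 (by omega) v (by rw [holdS1]; exact hv)) s
          norm_num at h1
          simp only [Bool.false_eq_true, if_false] at hY0
          linarith [hY0, h1]
        · -- c = true, x = circ, h0 = y
          subst hh; subst hx; subst hcA
          have holdS0 : (mstate l w t).getD 0 MSym.circ = MSym.circ := by rw [hs]; rfl
          have holdS1 : (mstate l w t).getD 1 MSym.circ = h0 := by rw [hs]; rfl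
          have h0i := congrFun (ih htle 0 (by omega) (fun _ => 0) (by rw [holdS0]; rfl)) s
          have h1 := congrFun (ih htle 1 (by omega) v (by rw [holdS1]; exact hv)) s
          norm_num at h0i h1 hY0
          linarith [hY0, h1, h0i]
        · -- c = true, x = mark, y = circ, h0 = mark
          subst hh; subst hx; subst hy; subst hcA
          have hveq : dlt l = v := by simpa [mval] using hv
          subst hveq
          have holdS0 : (mstate l w t).getD 0 MSym.circ = MSym.mark := by rw [hs]; rfl
          have holdS1 : (mstate l w t).getD 1 MSym.circ = MSym.circ := by rw [hs]; rfl
          have h0i := congrFun (ih htle 0 (by omega) (dlt l) (by rw [holdS0]; rfl)) s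
          have h1 := congrFun (ih htle 1 (by omega) (fun _ => 0) (by rw [holdS1]; rfl)) s
          norm_num at h0i h1 hY0
          linarith [hY0, h1, h0i]
      · by_cases hpt : p = l - 1
        · -- p = l - 1
          subst hpt
          rw [hns] at hv
          have hltop : l - 1 = rest.length + 1 := by omega
          rw [hltop, getD_shape_top] at hv
          funext s
          rw [if_neg (by omega)]
          have hT := congrFun hYtop s
          have hY2 := congrFun (hYlt (l-2) (by omega)) s
          have e1 : l - 1 - 1 = l - 2 := by omega
          rw [e1]
          have e2 : l - 2 + 1 = l - 1 := by omega
          rw [e2] at hY2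
          rcases hz with ⟨hcA, hzz⟩ | ⟨hcB, hzz⟩
          · -- c = true, z = circ
            subst hzz; subst hcA
            have hveq : (fun _ => (0:ℤ)) = v := by simpa [mval] using hv
            have hv0 : v s = 0 := by rw [← hveq]
            norm_num at hY2
            linarith [hT, hY2, hv0]
          · -- c = false, z = x
            subst hcB
            have holdS0 : (mstate l w t).getD 0 MSym.circ = z := by rw [hs, hzz]; rfl
            have h0i := congrFun (ih htle 0 (by omega) v (by rw [holdS0]; exact hv)) s
            norm_num at h0i hY2
            linarith [hT, hY2, h0i]
        · -- mid regime
          obtain ⟨q, rfl⟩ : ∃ q, p = q + 1 := ⟨p - 1, by omega⟩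
          have hq : q < rest.length := by omega
          have hS' : (mstate l w (t+1)).getD (q+1) MSym.circ
              = (mstate l w t).getD (q+2) MSym.circ := by
            rw [hns, getD_shape_mid _ _ _ _ _ hq, hs]
            rfl
          rw [hS'] at hv
          funext s
          rw [if_neg (by omega)]
          have hold := congrFun (ih htle (q+2) (by omega) v hv) s
          norm_num at hold
          have h1 := congrFun (hYlt (q+1) (by omega)) s
          have h2 := congrFun (hYlt q (by omega)) s
          norm_num at h1 h2 ⊢
          linarith [hold, h1, h2]
lemma ibar_two (l : ℕ) (hl : 2 ≤ l) : ibar l 2 = 2 := by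
  unfold ibar
  norm_num
  rw [Int.emod_eq_of_lt (by norm_num) (by exact_mod_cast hl)]
  rfl

lemma ibar_one (l : ℕ) (hl : 2 ≤ l) : ibar l 1 = 1 := by
  unfold ibar
  norm_num

lemma iota_eq (l : ℕ) (hl : 2 ≤ l) : iotaL l 2 1 = ee 0 := by
  funext t
  simp [iotaL, ibar_two l hl, ibar_one l hl, ee]

lemma cancel_key (l : ℕ) (hl : 2 ≤ l) (w : List Bool) (m : ℕ) (hm : m ≤ w.length)
    (hmark : (mstate l w m).getD 0 MSym.circ = MSym.mark) :
    applyWord l (w.take m) (ee 0) = dlt l := by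
  have h := inv_main l hl w m hm 0 (by omega) (dlt l) (by rw [hmark]; rfl)
  funext s
  rw [congrFun h s, if_pos rfl]
  ring

lemma frontA_zero (l : ℕ) (hl : 2 ≤ l) (N : List Bool)
    (hN : applyWord l N (ee 0) = dlt l) :
    applyWord l (true :: N) (ee 0) = fun _ => 0 := by
  have h1 : applyWord l (true :: N) (ee 0) = Ma l (applyWord l N (ee 0)) := rfl
  rw [h1, hN, Ma_dlt l hl]
/-- For a cancellation pair `(NAK, NBK)`, the extremal configurations of the
monomials `ANAK` and `ANBK` are identical. -/
theorem stmt15 (l : ℕ) (hl : 2 ≤ l) (N K : List Bool) (h : CancelPair l N K) :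
    ∀ i, xconf l (true :: (N ++ true :: K)) i = xconf l (true :: (N ++ false :: K)) i := by
  obtain ⟨hgood, hcsrc, hlast⟩ := h
  have hmark : (mstate l (N ++ true :: K) N.length).getD 0 MSym.circ = MSym.mark := hcsrc.1
  have hkey : applyWord l N (ee 0) = dlt l := by
    have hk := cancel_key l hl (N ++ true :: K) N.length (by simp) hmark
    rwa [List.take_left] at hk
  have hzero : applyWord l (true :: N) (ee 0) = fun _ => 0 := frontA_zero l hl N hkey
  have hiota : iotaL l 2 1 = ee 0 := iota_eq l hl
  intro i
  unfold xconf
  rcases Nat.lt_trichotomy i (N.length + 1) with hi | hi | hi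
  · -- i ≤ N.length
    have hg : (true :: (N ++ true :: K)).getD i true
        = (true :: (N ++ false :: K)).getD i true := by
      cases i with
      | zero => rfl
      | succ j =>
          have hj : j < N.length := by omega
          simp only [List.getD_cons_succ]
          rw [List.getD_append _ _ _ _ hj, List.getD_append _ _ _ _ hj]
    have ht : (true :: (N ++ true :: K)).take i = (true :: (N ++ false :: K)).take i := by
      cases i with
      | zero => rfl
      | succ j =>
          simp only [List.take_succ_cons]
          rw [List.take_append_of_le_length (by omega),
            List.take_append_of_le_length (by omega)]
    rw [hg, ht]
  · -- i = N.length + 1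
    subst hi
    have hg1 : (true :: (N ++ true :: K)).getD (N.length + 1) true = true := by
      simp only [List.getD_cons_succ]
      rw [List.getD_append_right _ _ _ _ (le_refl _)]
      simp
    have hg2 : (true :: (N ++ false :: K)).getD (N.length + 1) true = false := by
      simp only [List.getD_cons_succ]
      rw [List.getD_append_right _ _ _ _ (le_refl _)]
      simp
    have htk : (true :: (N ++ false :: K)).take (N.length + 1) = true :: N := by
      rw [List.take_succ_cons, List.take_append_of_le_length (le_refl _), List.take_length]
    rw [hg1, hg2, htk, hiota, hzero]
    norm_num
    rfl
  · -- i > N.length + 1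
    obtain ⟨j, rfl⟩ : ∃ j, i = N.length + 2 + j := ⟨i - (N.length + 2), by omega⟩
    have hidx : N.length + 2 + j = (N.length + 1 + j) + 1 := by omega
    have hgD : ∀ C : Bool, (true :: (N ++ C :: K)).getD (N.length + 2 + j) true
        = K.getD j true := by
      intro C
      rw [hidx, List.getD_cons_succ,
        List.getD_append_right _ _ _ _ (by omega)]
      have : N.length + 1 + j - N.length = j + 1 := by omega
      rw [this, List.getD_cons_succ]
    have htk : ∀ C : Bool, (true :: (N ++ C :: K)).take (N.length + 2 + j)
        = true :: (N ++ C :: K.take j) := by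
      intro C
      rw [hidx, List.take_succ_cons, List.take_append,
        List.take_of_length_le (by omega)]
      have : N.length + 1 + j - N.length = j + 1 := by omega
      rw [this, List.take_succ_cons]
    rw [hgD true, hgD false, htk true, htk false, hiota]
    by_cases hKj : K.getD j true = true
    · rw [hKj]
      simp
    · have hKj' : K.getD j true = false := by
        cases hK2 : K.getD j true
        · rfl
        · exact absurd hK2 hKj
      rw [hKj']
      simp only [Bool.false_eq_true, if_false]
      have hsplit : ∀ C : Bool, applyWord l (true :: (N ++ C :: K.take j)) (ee 0)
          = applyWord l (true :: N)
              (if C then Ma l (applyWord l (K.take j) (ee 0))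
               else Mb l (applyWord l (K.take j) (ee 0))) := by
        intro C
        have hsp : true :: (N ++ C :: K.take j) = (true :: N) ++ (C :: K.take j) := by simp
        rw [hsp, applyWord_append]
        rfl
      rw [hsplit true, hsplit false]
      simp only [if_pos, Bool.false_eq_true, if_false]
      set u := applyWord l (K.take j) (ee 0) with hu
      rw [Mb_decomp l u]
      have h1 : (fun s => Ma l u s + Mb l u 0 * ee 0 s)
          = fun s => 1 * Ma l u s + (Mb l u 0) * ee 0 s := by funext s; ring
      rw [h1, applyWord_lin]
      funext s
      rw [congrFun hzero s]
      ring
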